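/- Let X be an n × p real matrix, let β* ∈ ℝᵖ have support contained in a subset S ⊆ {1,…,p}, let W ∈ ℝⁿ, and set Y = Xβ* + W. Let U ⊆ {1,…,p} and suppose both submatrices X_U and X_S have full column rank. Then ‖Π⊥_U Y‖²_2 − ‖Π⊥_S Y‖²_2 = ‖Π⊥_U ( X_{S\U} β*_{S\U} + W )‖²_2 − ‖Π⊥_S W‖²_2, where β*_{S\U} denotes the subvector of β* indexed by S\U and X_{S\U} the corresponding columns of X. In particular, the least-squares residual of subset U is smaller than that of S if and only if the right-hand side is negative. -/
import Mathlib


open Matrix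

/-- The `n × |V|` submatrix of columns of `A` indexed by `V`. -/
noncomputable def colsOf {n p : ℕ} (A : Fin n → Fin p → ℝ) (V : Finset (Fin p)) :
    Matrix (Fin n) {j : Fin p // j ∈ V} ℝ :=
  Matrix.of fun i j => A i j.1

/-- `Π⊥_V = I - X_V (X_Vᵀ X_V)⁻¹ X_Vᵀ`, the projection onto the orthogonal complement
of the range of the column submatrix `X_V`. -/
noncomputable def projPerp {n p : ℕ} (A : Fin n → Fin p → ℝ) (V : Finset (Fin p)) :
    Matrix (Fin n) (Fin n) ℝ :=
  1 - colsOf A V * ((colsOf A V)ᵀ * colsOf A V)⁻¹ * (colsOf A V)ᵀ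

/-- `Δ(U) = ‖Π⊥_U (X_{S\U} β_{S\U} + W)‖₂² - ‖Π⊥_S W‖₂²`. -/
noncomputable def Delta {n p : ℕ} (X : Fin n → Fin p → ℝ) (W : Fin n → ℝ)
    (β : Fin p → ℝ) (S U : Finset (Fin p)) : ℝ :=
  ∑ i, ((projPerp X U).mulVec (fun i' => (∑ j ∈ S \ U, X i' j * β j) + W i') i) ^ 2
    - ∑ i, ((projPerp X S).mulVec W i) ^ 2

lemma isUnit_of_rank_eq_card {m : Type*} [Fintype m] [DecidableEq m] (M : Matrix m m ℝ)
    (h : M.rank = Fintype.card m) : IsUnit M := by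
  have hr : LinearMap.range M.mulVecLin = ⊤ := by
    apply Submodule.eq_top_of_finrank_eq
    rw [Module.finrank_fintype_fun_eq_card]
    exact h
  have hbij : Function.Bijective M.mulVecLin :=
    ⟨(LinearMap.injective_iff_surjective.mpr (LinearMap.range_eq_top.mp hr)),
      LinearMap.range_eq_top.mp hr⟩
  have h1 : IsUnit M.mulVecLin := (Module.End.isUnit_iff _).mpr hbij
  have he : Matrix.toLinAlgEquiv' M = M.mulVecLin := rfl
  rw [← he] at h1
  have := h1.map (Matrix.toLinAlgEquiv' (R := ℝ) (n := m)).symm.toRingEquiv.toRingHom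
  simpa using this

lemma projPerp_mul_cols {n p : ℕ} (A : Fin n → Fin p → ℝ) (V : Finset (Fin p))
    (h : (colsOf A V).rank = V.card) :
    projPerp A V * colsOf A V = 0 := by
  set B := colsOf A V
  have hu : IsUnit (Bᵀ * B) := by
    apply isUnit_of_rank_eq_card
    rw [Matrix.rank_transpose_mul_self, h, Fintype.card_coe]
  have hinv : (Bᵀ * B)⁻¹ * (Bᵀ * B) = 1 :=
    Matrix.nonsing_inv_mul _ ((Matrix.isUnit_iff_isUnit_det _).mp hu)
  calc projPerp A V * B = B - B * ((Bᵀ * B)⁻¹ * (Bᵀ * B)) := by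
        rw [projPerp, Matrix.sub_mul, Matrix.one_mul, Matrix.mul_assoc, Matrix.mul_assoc]
    _ = 0 := by rw [hinv, Matrix.mul_one, sub_self]

lemma projPerp_mulVec_sum {n p : ℕ} (A : Fin n → Fin p → ℝ) (V : Finset (Fin p))
    (h : (colsOf A V).rank = V.card) (c : Fin p → ℝ) :
    (projPerp A V).mulVec (fun i => ∑ j ∈ V, A i j * c j) = 0 := by
  have hv : (fun i => ∑ j ∈ V, A i j * c j) = (colsOf A V).mulVec (fun j => c j.1) := by
    funext i
    simp only [Matrix.mulVec, dotProduct, colsOf, Matrix.of_apply]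
    exact (Finset.sum_coe_sort V (fun j => A i j * c j)).symm
  rw [hv, Matrix.mulVec_mulVec, projPerp_mul_cols A V h, Matrix.zero_mulVec]

/-- **Difference of least-squares residuals (Lemma 1).**
If `Y = X β + W` with the support of `β` contained in `S`, and the column submatrices
`X_U` and `X_S` have full column rank, then
`‖Π⊥_U Y‖₂² - ‖Π⊥_S Y‖₂² = ‖Π⊥_U (X_{S\U} β_{S\U} + W)‖₂² - ‖Π⊥_S W‖₂²`; in particular,
the least-squares residual of `U` is smaller than that of `S` iff the right-hand side is
negative. -/
theorem residual_difference_formula {n p : ℕ} (X : Fin n → Fin p → ℝ) (β : Fin p → ℝ)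
    (W : Fin n → ℝ) (S U : Finset (Fin p))
    (hsupp : ∀ i, β i ≠ 0 → i ∈ S)
    (hrU : (colsOf X U).rank = U.card)
    (hrS : (colsOf X S).rank = S.card) :
    (∑ i, ((projPerp X U).mulVec (fun i' => (∑ j, X i' j * β j) + W i') i) ^ 2
        - ∑ i, ((projPerp X S).mulVec (fun i' => (∑ j, X i' j * β j) + W i') i) ^ 2
      = Delta X W β S U) ∧
    (∑ i, ((projPerp X U).mulVec (fun i' => (∑ j, X i' j * β j) + W i') i) ^ 2
        < ∑ i, ((projPerp X S).mulVec (fun i' => (∑ j, X i' j * β j) + W i') i) ^ 2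
      ↔ Delta X W β S U < 0) := by
  classical
  have hsum : ∀ i', ∑ j, X i' j * β j = ∑ j ∈ S, X i' j * β j := by
    intro i'
    refine (Finset.sum_subset (Finset.subset_univ S) ?_).symm
    intro j _ hj
    have hβ : β j = 0 := by
      by_contra hb
      exact hj (hsupp j hb)
    rw [hβ, mul_zero]
  -- the `S ∩ U` part as a sum over `U`
  set c : Fin p → ℝ := fun j => if j ∈ S then β j else 0 with hc
  have hinter : ∀ i', ∑ j ∈ U, X i' j * c j = ∑ j ∈ S ∩ U, X i' j * β j := by
    intro i'
    rw [← Finset.sum_subset (Finset.inter_subset_right (s₁ := S) (s₂ := U))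
      (f := fun j => X i' j * c j)]
    · refine Finset.sum_congr rfl fun j hj => ?_
      have : j ∈ S := (Finset.mem_inter.mp hj).1
      simp [hc, this]
    · intro j _ hj
      have : j ∉ S := fun hS' => hj (Finset.mem_inter.mpr ⟨hS', by assumption⟩)
      simp [hc, this]
  have hsplit : ∀ i', ∑ j ∈ S, X i' j * β j
      = (∑ j ∈ U, X i' j * c j) + ∑ j ∈ S \ U, X i' j * β j := by
    intro i'
    rw [hinter i', Finset.sum_inter_add_sum_sdiff]
  have hS : (projPerp X S).mulVec (fun i' => (∑ j, X i' j * β j) + W i')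
      = (projPerp X S).mulVec W := by
    have h1 : (fun i' => (∑ j, X i' j * β j) + W i')
        = (fun i' => ∑ j ∈ S, X i' j * β j) + W := by
      funext i'; simp [hsum i']
    rw [h1, Matrix.mulVec_add, projPerp_mulVec_sum X S hrS β, zero_add]
  have hU : (projPerp X U).mulVec (fun i' => (∑ j, X i' j * β j) + W i')
      = (projPerp X U).mulVec (fun i' => (∑ j ∈ S \ U, X i' j * β j) + W i') := by
    have h1 : (fun i' => (∑ j, X i' j * β j) + W i')
        = (fun i' => ∑ j ∈ U, X i' j * c j)
          + (fun i' => (∑ j ∈ S \ U, X i' j * β j) + W i') := by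
      funext i'
      simp only [Pi.add_apply]
      rw [hsum i', hsplit i', add_assoc]
    rw [h1, Matrix.mulVec_add, projPerp_mulVec_sum X U hrU c, zero_add]
  rw [hU, hS]
  exact ⟨rfl, by rw [Delta]; exact sub_neg.symm⟩
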